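/- Let K be a field, let O_v ⊆ O_{v0} be valuation subrings of K with induced valuation subring Ō_v of the residue field Kv0, let L/K be a finite field extension, and let O_u be a prolongation of O_v to L. Let O_{u0} be the unique valuation subring of L with O_u ⊆ O_{u0} and O_{u0} ∩ K = O_{v0}, and let Ō_u be the image of O_u in the residue field Lu0 of O_{u0}, which is a prolongation of Ō_v to Lu0 (with respect to the embedding Kv0 → Lu0 induced by the inclusion O_{v0} ⊆ O_{u0}). Then e(u/v) = e(u0/v0)·e(ū/v̄) and f(u/v) = f(ū/v̄). -/

import Mathlib

variable {K : Type*} [Field K] {L : Type*} [Field L]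

/-- The ring homomorphism between valuation subrings induced by a field embedding,
when the lower valuation subring is the pullback of the upper one. -/
def prolongHom (f : K →+* L) (Ov : ValuationSubring K) (Ow : ValuationSubring L)
    (h : Ow.comap f = Ov) : Ov →+* Ow where
  toFun x := ⟨f x, by
    have hx : (x : K) ∈ Ow.comap f := by rw [h]; exact x.2
    exact ValuationSubring.mem_comap.mp hx⟩
  map_one' := by ext; simp
  map_mul' x y := by ext; simp
  map_zero' := by ext; simp
  map_add' x y := by ext; simp

theorem prolongHom_isLocalHom (f : K →+* L) (Ov : ValuationSubring K)
    (Ow : ValuationSubring L) (h : Ow.comap f = Ov) :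
    IsLocalHom (prolongHom f Ov Ow h) := by
  constructor
  intro a ha
  rcases isUnit_iff_exists_inv.mp ha with ⟨b, hb⟩
  have hb' : f a * (b : L) = 1 := congrArg Subtype.val hb
  have hfa : f (a : K) ≠ 0 := left_ne_zero_of_mul_eq_one hb'
  have ha0 : (a : K) ≠ 0 := by
    intro h0
    exact hfa (by rw [h0, map_zero])
  have hbeq : (b : L) = f ((a : K)⁻¹) := by
    rw [map_inv₀]
    exact eq_inv_of_mul_eq_one_right hb'
  have hmem : (a : K)⁻¹ ∈ Ov := by
    have hm : (a : K)⁻¹ ∈ Ow.comap f := ValuationSubring.mem_comap.mpr (hbeq ▸ b.2)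
    rwa [h] at hm
  refine isUnit_iff_exists_inv.mpr ⟨⟨(a : K)⁻¹, hmem⟩, ?_⟩
  ext
  simp [mul_inv_cancel₀ ha0]

/-- The induced embedding of residue fields. -/
noncomputable def residueFieldMap (f : K →+* L) (Ov : ValuationSubring K)
    (Ow : ValuationSubring L) (h : Ow.comap f = Ov) :
    IsLocalRing.ResidueField Ov →+* IsLocalRing.ResidueField Ow :=
  haveI := prolongHom_isLocalHom f Ov Ow h
  IsLocalRing.ResidueField.map (prolongHom f Ov Ow h)

/-- The ramification index `e(w/v)`: the index of the image of `Kˣ/Ovˣ` in `Lˣ/Owˣ`. -/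
noncomputable def ramificationIndex (f : K →+* L) (Ow : ValuationSubring L) : ℕ :=
  ((QuotientGroup.mk' Ow.unitGroup).comp (Units.map (f : K →* L))).range.index

open scoped Classical in
/-- The inertia degree `f(w/v)`: the degree of the residue field extension. -/
noncomputable def inertiaDegree (f : K →+* L) (Ov : ValuationSubring K)
    (Ow : ValuationSubring L) : ℕ :=
  if h : Ow.comap f = Ov then
    @Module.finrank (IsLocalRing.ResidueField Ov) (IsLocalRing.ResidueField Ow) _ _
      (residueFieldMap f Ov Ow h).toModule
  else 0

/-- The set of prolongations of a valuation subring of `K` to `L`. -/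
def prolongations (Ov : ValuationSubring K) (L : Type*) [Field L] [Algebra K L] :
    Set (ValuationSubring L) :=
  {Ow | Ow.comap (algebraMap K L) = Ov}

/-- The fundamental equality for the extension `L/K`. -/
def FundamentalEquality (Ov : ValuationSubring K) (L : Type*) [Field L] [Algebra K L] : Prop :=
  (prolongations Ov L).Finite ∧
    Module.finrank K L =
      ∑ᶠ Ow ∈ prolongations Ov L,
        ramificationIndex (algebraMap K L) Ow * inertiaDegree (algebraMap K L) Ov Ow

/-- A valued field is defectless if the fundamental equality holds for every
finite extension. -/
def IsDefectless {K : Type u} [Field K] (Ov : ValuationSubring K) : Prop :=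
  ∀ (L : Type u) [Field L] [Algebra K L], FiniteDimensional K L →
    FundamentalEquality Ov L

/-- A valued field is separably defectless if the fundamental equality holds for every
finite separable extension. -/
def IsSeparablyDefectless {K : Type u} [Field K] (Ov : ValuationSubring K) : Prop :=
  ∀ (L : Type u) [Field L] [Algebra K L], FiniteDimensional K L →
    Algebra.IsSeparable K L → FundamentalEquality Ov L

open IsLocalRing

section Helpers

variable {F : Type*} [Field F]

lemma mem_unitGroup_iff_mem (A : ValuationSubring F) (u : Fˣ) :
    u ∈ A.unitGroup ↔ (u : F) ∈ A ∧ ((u⁻¹ : Fˣ) : F) ∈ A := by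
  have hmul : A.valuation (u : F) * A.valuation ((u⁻¹ : Fˣ) : F) = 1 := by
    rw [← map_mul, Units.mul_inv, map_one]
  constructor
  · intro h
    have h1 : A.valuation (u : F) = 1 := h
    have h2 : A.valuation ((u⁻¹ : Fˣ) : F) = 1 := by
      rwa [h1, one_mul] at hmul
    exact ⟨A.mem_of_valuation_le_one _ h1.le, A.mem_of_valuation_le_one _ h2.le⟩
  · rintro ⟨h1, h2⟩
    have h1' := (A.valuation_le_one_iff _).mpr h1
    have h2' := (A.valuation_le_one_iff _).mpr h2
    have : (1 : A.ValueGroup) ≤ A.valuation (u : F) := by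
      calc (1 : A.ValueGroup) = A.valuation (u : F) * A.valuation ((u⁻¹ : Fˣ) : F) := hmul.symm
        _ ≤ A.valuation (u : F) * 1 := mul_le_mul_right h2' _
        _ = A.valuation (u : F) := mul_one _
    exact le_antisymm h1' this

lemma coarsen_nonunit {O O0 : ValuationSubring F} (hle : O ≤ O0)
    {m : F} (hm0 : m ∈ O0) (hnu : ¬ IsUnit (⟨m, hm0⟩ : O0)) :
    ∃ hm : m ∈ O, ¬ IsUnit (⟨m, hm⟩ : O) := by
  have hinvmem : ∀ h0 : m ≠ 0, m⁻¹ ∉ O0 := by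
    intro h0 hmem
    exact hnu (isUnit_iff_exists_inv.mpr ⟨⟨m⁻¹, hmem⟩, Subtype.ext (mul_inv_cancel₀ h0)⟩)
  have hm : m ∈ O := by
    by_cases h0 : m = 0
    · exact h0 ▸ zero_mem _
    · exact (O.mem_or_inv_mem m).resolve_right fun h => hinvmem h0 (hle h)
  refine ⟨hm, fun hu => ?_⟩
  rcases isUnit_iff_exists_inv.mp hu with ⟨b, hb⟩
  have hb' : m * (b : F) = 1 := congrArg Subtype.val hb
  have h0 : m ≠ 0 := fun h => by simp [h] at hb'
  have : (b : F) = m⁻¹ := eq_inv_of_mul_eq_one_right hb'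
  exact hinvmem h0 (hle (this ▸ b.2))

lemma residue_eq_iff {R : Type*} [CommRing R] [IsLocalRing R] (a b : R) :
    residue R a = residue R b ↔ a - b ∈ maximalIdeal R :=
  Ideal.Quotient.eq

lemma mem_of_residue_mem {O O0 : ValuationSubring F} (hle : O ≤ O0)
    {Obar : ValuationSubring (ResidueField O0)}
    (hObar : (Obar : Set (ResidueField O0)) = (residue O0) '' {y : O0 | (y : F) ∈ O})
    {z : F} (hz0 : z ∈ O0) (hz : residue O0 ⟨z, hz0⟩ ∈ Obar) : z ∈ O := by
  have hz' : residue O0 ⟨z, hz0⟩ ∈ (Obar : Set (ResidueField O0)) := hz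
  rw [hObar] at hz'
  rcases hz' with ⟨y, hyO, hy⟩
  have hsub : (⟨z, hz0⟩ : O0) - y ∈ maximalIdeal O0 := (residue_eq_iff _ _).mp hy.symm
  have hnu : ¬ IsUnit ((⟨z, hz0⟩ : O0) - y) := hsub
  obtain ⟨hm, -⟩ := coarsen_nonunit hle ((⟨z, hz0⟩ - y : O0)).2 hnu
  have h1 : z - (y : F) ∈ O := hm
  have := O.add_mem _ _ h1 hyO
  simpa using this

lemma residue_mem_of_mem {O O0 : ValuationSubring F} (hle : O ≤ O0)
    {Obar : ValuationSubring (ResidueField O0)}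
    (hObar : (Obar : Set (ResidueField O0)) = (residue O0) '' {y : O0 | (y : F) ∈ O})
    {z : F} (hz0 : z ∈ O0) (hz : z ∈ O) : residue O0 ⟨z, hz0⟩ ∈ Obar := by
  rw [← SetLike.mem_coe, hObar]
  exact ⟨⟨z, hz0⟩, hz, rfl⟩

end Helpers

open IsLocalRing

section Bar
variable {F : Type*} [Field F] (O O0 : ValuationSubring F) (hle : O ≤ O0)
  (Obar : ValuationSubring (ResidueField O0))
  (hObar : (Obar : Set (ResidueField O0)) = (residue O0) '' {y : O0 | (y : F) ∈ O})

/-- The map `O → Ō` induced by the residue map of `O0`. -/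
noncomputable def barHom : O →+* Obar where
  toFun x := ⟨residue O0 ⟨(x : F), hle x.2⟩, by
    rw [← SetLike.mem_coe, hObar]; exact ⟨⟨(x : F), hle x.2⟩, x.2, rfl⟩⟩
  map_one' := by
    apply Subtype.ext
    show residue O0 ⟨((1 : O) : F), _⟩ = 1
    rw [show (⟨((1 : O) : F), hle (1 : O).2⟩ : O0) = 1 from rfl, map_one]
  map_mul' x y := by
    apply Subtype.ext
    show residue O0 _ = residue O0 _ * residue O0 _
    rw [← map_mul]
    rfl
  map_zero' := by
    apply Subtype.ext
    show residue O0 ⟨((0 : O) : F), _⟩ = 0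
    rw [show (⟨((0 : O) : F), hle (0 : O).2⟩ : O0) = 0 from rfl, map_zero]
  map_add' x y := by
    apply Subtype.ext
    show residue O0 _ = residue O0 _ + residue O0 _
    rw [← map_add]
    rfl

lemma barHom_coe (x : O) :
    (barHom O O0 hle Obar hObar x : ResidueField O0) = residue O0 ⟨(x : F), hle x.2⟩ := rfl

lemma barPhi_surjective :
    Function.Surjective ((residue Obar).comp (barHom O O0 hle Obar hObar)) := by
  intro z
  obtain ⟨w, rfl⟩ := residue_surjective z
  have hw : (w : ResidueField O0) ∈ (Obar : Set (ResidueField O0)) := w.2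
  rw [hObar] at hw
  rcases hw with ⟨y, hyO, hy⟩
  refine ⟨⟨(y : F), hyO⟩, ?_⟩
  simp only [RingHom.comp_apply]
  congr 1
  apply Subtype.ext
  rw [barHom_coe]
  exact hy

lemma barPhi_ker :
    RingHom.ker ((residue Obar).comp (barHom O O0 hle Obar hObar)) = maximalIdeal O := by
  ext x
  simp only [RingHom.mem_ker, RingHom.comp_apply]
  rw [show ∀ a : Obar, residue Obar a = 0 ↔ a ∈ maximalIdeal Obar from
    fun a => Ideal.Quotient.eq_zero_iff_mem]
  constructor
  · intro hx
    -- barHom x ∈ maximalIdeal Obar → x nonunit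
    rw [mem_maximalIdeal, mem_nonunits_iff] at hx ⊢
    intro hu
    exact hx (hu.map (barHom O O0 hle Obar hObar))
  · intro hx
    rw [mem_maximalIdeal, mem_nonunits_iff] at hx ⊢
    intro hu
    apply hx
    rcases isUnit_iff_exists_inv.mp hu with ⟨b, hb⟩
    -- b : Obar, (barHom x) * b = 1 in Obar
    have hb1 : (barHom O O0 hle Obar hObar x : ResidueField O0) * (b : ResidueField O0) = 1 :=
      congrArg Subtype.val hb
    have hbmem : (b : ResidueField O0) ∈ (Obar : Set (ResidueField O0)) := b.2
    rw [hObar] at hbmem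
    rcases hbmem with ⟨y, hyO, hy⟩
    rw [barHom_coe, ← hy, ← map_mul] at hb1
    -- residue (x*y) = 1 = residue 1
    have hsub : (⟨(x : F), hle x.2⟩ : O0) * y - 1 ∈ maximalIdeal O0 := by
      rw [← Ideal.Quotient.eq]
      exact hb1
    have hnu : ¬ IsUnit ((⟨(x : F), hle x.2⟩ : O0) * y - 1) := hsub
    obtain ⟨hm, hmnu⟩ := coarsen_nonunit hle ((⟨(x : F), hle x.2⟩ * y - 1 : O0)).2 hnu
    -- (x : F) * y - 1 ∈ O, nonunit in O; so x * ⟨y⟩ = 1 + m with m in max ideal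
    have hyF : ((x : F) * (y : F) - 1) ∈ O := hm
    have hymem : (y : F) ∈ O := hyO
    have hneg : (-(⟨(x : F) * (y : F) - 1, hyF⟩ : O)) ∈ nonunits O := by
      rw [mem_nonunits_iff]
      intro h
      exact hmnu (by simpa using h.neg)
    have hunit : IsUnit ((1 : O) - (-(⟨(x : F) * (y : F) - 1, hyF⟩ : O))) :=
      IsLocalRing.isUnit_one_sub_self_of_mem_nonunits _ hneg
    rw [sub_neg_eq_add] at hunit
    have heq : (1 : O) + ⟨(x : F) * (y : F) - 1, hyF⟩ = x * ⟨(y : F), hymem⟩ := by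
      apply Subtype.ext
      show (1 : F) + ((x : F) * (y : F) - 1) = (x : F) * (y : F)
      ring
    rw [heq] at hunit
    exact isUnit_of_mul_isUnit_left hunit
end Bar

section MoreHelpers
variable {F : Type*} [Field F] (O O0 : ValuationSubring F) (hle : O ≤ O0)
  (Obar : ValuationSubring (IsLocalRing.ResidueField O0))
  (hObar : (Obar : Set (IsLocalRing.ResidueField O0)) =
    (IsLocalRing.residue O0) '' {y : O0 | (y : F) ∈ O})

/-- The isomorphism between the residue field of `O` and that of `Ō`. -/
noncomputable def barEquiv :
    IsLocalRing.ResidueField O ≃+* IsLocalRing.ResidueField Obar :=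
  (Ideal.quotEquivOfEq (barPhi_ker O O0 hle Obar hObar).symm).trans
    (RingHom.quotientKerEquivOfSurjective (barPhi_surjective O O0 hle Obar hObar))

lemma barEquiv_residue (x : O) :
    barEquiv O O0 hle Obar hObar (IsLocalRing.residue O x) =
      IsLocalRing.residue Obar (barHom O O0 hle Obar hObar x) := rfl

end MoreHelpers

lemma residueFieldMap_residue (f : K →+* L) (Ov : ValuationSubring K)
    (Ow : ValuationSubring L) (h : Ow.comap f = Ov) (x : Ov) :
    residueFieldMap f Ov Ow h (IsLocalRing.residue Ov x) =
      IsLocalRing.residue Ow (prolongHom f Ov Ow h x) := by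
  haveI := prolongHom_isLocalHom f Ov Ow h
  exact IsLocalRing.ResidueField.map_residue _ x

lemma ramificationIndex_eq_index_sup (f : K →+* L) (Ow : ValuationSubring L) :
    ramificationIndex f Ow = ((Units.map (f : K →* L)).range ⊔ Ow.unitGroup).index := by
  rw [ramificationIndex, MonoidHom.range_comp, Subgroup.index_map, QuotientGroup.ker_mk',
    MonoidHom.range_eq_top_of_surjective _ (QuotientGroup.mk'_surjective _),
    Subgroup.index_top, mul_one]


set_option maxHeartbeats 1000000 in
/-- Multiplicativity of ramification index and invariance of inertia degree under the
standard decomposition: let `O_v ⊆ O_{v0}` be valuation subrings of `K` with induced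
valuation subring `Ō_v` of the residue field `Kv0` of `O_{v0}`, let `L/K` be a finite
extension, let `O_u` be a prolongation of `O_v` to `L`, let `O_{u0}` be the (unique)
coarsening of `O_u` prolonging `O_{v0}`, and let `Ō_u` be the image of `O_u` in the
residue field `Lu0` of `O_{u0}` (a prolongation of `Ō_v` with respect to the embedding
`Kv0 → Lu0`).  Then `e(u/v) = e(u0/v0)·e(ū/v̄)` and `f(u/v) = f(ū/v̄)`. -/

theorem ramificationIndex_comp_and_inertiaDegree_comp
    {K L : Type*} [Field K] [Field L] [Algebra K L] [FiniteDimensional K L]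
    (Ov Ov0 : ValuationSubring K) (hle : Ov ≤ Ov0)
    (Obarv : ValuationSubring (IsLocalRing.ResidueField Ov0))
    (hObarv : (Obarv : Set (IsLocalRing.ResidueField Ov0)) =
      (IsLocalRing.residue Ov0) '' {y : Ov0 | (y : K) ∈ Ov})
    (Ou Ou0 : ValuationSubring L)
    (hu : Ou.comap (algebraMap K L) = Ov)
    (hule : Ou ≤ Ou0)
    (hu0 : Ou0.comap (algebraMap K L) = Ov0)
    (Obaru : ValuationSubring (IsLocalRing.ResidueField Ou0))
    (hObaru : (Obaru : Set (IsLocalRing.ResidueField Ou0)) =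
      (IsLocalRing.residue Ou0) '' {y : Ou0 | (y : L) ∈ Ou}) :
    ramificationIndex (algebraMap K L) Ou =
        ramificationIndex (algebraMap K L) Ou0 *
          ramificationIndex (residueFieldMap (algebraMap K L) Ov0 Ou0 hu0) Obaru ∧
      inertiaDegree (algebraMap K L) Ov Ou =
        inertiaDegree (residueFieldMap (algebraMap K L) Ov0 Ou0 hu0) Obarv Obaru := by
  classical
  set g := residueFieldMap (algebraMap K L) Ov0 Ou0 hu0 with hg
  have hcomap : ∀ x : K, algebraMap K L x ∈ Ou0 ↔ x ∈ Ov0 := fun x => by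
    rw [← hu0]; exact (ValuationSubring.mem_comap).symm
  have hcomapu : ∀ x : K, algebraMap K L x ∈ Ou ↔ x ∈ Ov := fun x => by
    rw [← hu]; exact (ValuationSubring.mem_comap).symm
  -- the key fact : Obaru pulls back to Obarv along g
  have key : ∀ y : Ov0, (g (IsLocalRing.residue Ov0 y) ∈ Obaru ↔ (y : K) ∈ Ov) := by
    intro y
    rw [hg, residueFieldMap_residue]
    constructor
    · intro h
      exact (hcomapu _).mp (mem_of_residue_mem hule hObaru _ h)
    · intro h
      exact residue_mem_of_mem hule hObaru _ ((hcomapu _).mpr h)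
  have keyv : ∀ y : Ov0, (IsLocalRing.residue Ov0 y ∈ Obarv ↔ (y : K) ∈ Ov) := by
    intro y
    constructor
    · intro h
      exact mem_of_residue_mem hle hObarv y.2 h
    · intro h
      exact residue_mem_of_mem hle hObarv y.2 h
  have hbar : Obaru.comap g = Obarv := by
    ext a
    obtain ⟨y, rfl⟩ := IsLocalRing.residue_surjective a
    rw [ValuationSubring.mem_comap, key, keyv]
  constructor
  · -- ramification indices
    have fM : K →* L := (algebraMap K L : K →* L)
    set R : Subgroup Lˣ := (Units.map (algebraMap K L : K →* L)).range with hR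
    set U : Subgroup Lˣ := Ou.unitGroup with hU
    set U0 : Subgroup Lˣ := Ou0.unitGroup with hU0
    set Rb : Subgroup (IsLocalRing.ResidueField Ou0)ˣ :=
      (Units.map (g : IsLocalRing.ResidueField Ov0 →* IsLocalRing.ResidueField Ou0)).range with hRb
    set Ub : Subgroup (IsLocalRing.ResidueField Ou0)ˣ := Obaru.unitGroup with hUb
    have hUle : U ≤ U0 := ValuationSubring.unitGroup_le_unitGroup.mpr hule
    have hle1 : R ⊔ U ≤ R ⊔ U0 := sup_le_sup_left hUle R
    rw [ramificationIndex_eq_index_sup, ramificationIndex_eq_index_sup,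
      ramificationIndex_eq_index_sup, ← hR, ← hU, ← hU0, ← hRb, ← hUb]
    rw [← Subgroup.relIndex_mul_index hle1, mul_comm]
    congr 1
    have hsup : R ⊔ U0 = (R ⊔ U) ⊔ U0 := by
      rw [sup_assoc, sup_eq_right.mpr hUle]
    rw [hsup, Subgroup.relIndex_sup_left]
    -- now : (R ⊔ U).relindex U0 = (Rb ⊔ Ub).index
    set χ : Ou0.unitGroup →* (IsLocalRing.ResidueField Ou0)ˣ :=
      Ou0.unitGroupToResidueFieldUnits with hχ
    set χK : Ov0.unitGroup →* (IsLocalRing.ResidueField Ov0)ˣ :=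
      Ov0.unitGroupToResidueFieldUnits with hχK
    set φ : Ou0.unitGroup →* (IsLocalRing.ResidueField Ou0)ˣ ⧸ (Rb ⊔ Ub) :=
      (QuotientGroup.mk' (Rb ⊔ Ub)).comp χ with hφ
    have hφsurj : Function.Surjective φ :=
      (QuotientGroup.mk'_surjective _).comp Ou0.surjective_unitGroupToResidueFieldUnits
    -- coercion computations
    have hcoe : ∀ y : Ou0.unitGroup, (χ y : IsLocalRing.ResidueField Ou0) =
        IsLocalRing.residue Ou0 ⟨((y : Lˣ) : L),
          ((mem_unitGroup_iff_mem Ou0 _).mp y.2).1⟩ := by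
      intro y
      rw [hχ, ValuationSubring.coe_unitGroupToResidueFieldUnits_apply]
      congr 1
    have hcoeK : ∀ y : Ov0.unitGroup, (χK y : IsLocalRing.ResidueField Ov0) =
        IsLocalRing.residue Ov0 ⟨((y : Kˣ) : K),
          ((mem_unitGroup_iff_mem Ov0 _).mp y.2).1⟩ := by
      intro y
      rw [hχK, ValuationSubring.coe_unitGroupToResidueFieldUnits_apply]
      congr 1
    -- membership in Ub corresponds to membership in U
    have hUbar : ∀ x : Ou0.unitGroup, χ x ∈ Ub ↔ (x : Lˣ) ∈ U := by
      intro x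
      rw [hUb, hU, mem_unitGroup_iff_mem, mem_unitGroup_iff_mem]
      have hinv : (χ x)⁻¹ = χ x⁻¹ := (map_inv χ x).symm
      rw [hcoe x, hinv, hcoe x⁻¹]
      constructor
      · rintro ⟨h1, h2⟩
        exact ⟨mem_of_residue_mem hule hObaru _ h1, mem_of_residue_mem hule hObaru _ h2⟩
      · rintro ⟨h1, h2⟩
        exact ⟨residue_mem_of_mem hule hObaru _ h1, residue_mem_of_mem hule hObaru _ h2⟩
    -- images of units of K
    have hmapmem : ∀ k : Kˣ, k ∈ Ov0.unitGroup →
        Units.map (algebraMap K L : K →* L) k ∈ U0 := by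
      intro k hk
      rw [mem_unitGroup_iff_mem] at hk
      rw [hU0, mem_unitGroup_iff_mem]
      exact ⟨(hcomap _).mpr hk.1, (hcomap _).mpr hk.2⟩
    have hH2 : ∀ (k : Kˣ) (hk : k ∈ Ov0.unitGroup) (hm :
        Units.map (algebraMap K L : K →* L) k ∈ U0),
        χ ⟨Units.map (algebraMap K L : K →* L) k, hm⟩ =
          Units.map (g : IsLocalRing.ResidueField Ov0 →* IsLocalRing.ResidueField Ou0)
            (χK ⟨k, hk⟩) := by
      intro k hk hm
      apply Units.ext
      rw [hcoe]
      show _ = g ((χK ⟨k, hk⟩ : IsLocalRing.ResidueField Ov0))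
      rw [hcoeK, hg, residueFieldMap_residue]
      rfl
    -- kernel computation
    have hker : φ.ker = (R ⊔ U).subgroupOf U0 := by
      ext u
      rw [MonoidHom.mem_ker, hφ, MonoidHom.comp_apply, QuotientGroup.mk'_apply,
        QuotientGroup.eq_one_iff, Subgroup.mem_subgroupOf]
      constructor
      · intro h
        rcases Subgroup.mem_sup.mp h with ⟨rb, hrb, wb, hwb, heq⟩
        rcases hrb with ⟨kb, rfl⟩
        obtain ⟨k, hk⟩ := Ov0.surjective_unitGroupToResidueFieldUnits kb
        have hmem : Units.map (algebraMap K L : K →* L) (k : Kˣ) ∈ U0 := hmapmem _ k.2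
        set z : Ou0.unitGroup :=
          u * (⟨Units.map (algebraMap K L : K →* L) (k : Kˣ), hmem⟩ : Ou0.unitGroup)⁻¹ with hz
        have hχz : χ z ∈ Ub := by
          have h1 : χ ⟨Units.map (algebraMap K L : K →* L) (k : Kˣ), hmem⟩ =
              Units.map (g : _ →* _) kb := by
            rw [hH2 _ k.2 hmem]
            congr 1
          have h2 : χ z = χ u * (Units.map (g : _ →* _) kb)⁻¹ := by
            rw [hz, map_mul, map_inv, h1]
          rw [h2, ← heq, mul_comm (Units.map (g : _ →* _) kb) wb, mul_inv_cancel_right]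
          exact hwb
        have hzU : (z : Lˣ) ∈ U := (hUbar z).mp hχz
        have hufact : (u : Lˣ) = Units.map (algebraMap K L : K →* L) (k : Kˣ) * (z : Lˣ) := by
          have : (z : Lˣ) = (u : Lˣ) * (Units.map (algebraMap K L : K →* L) (k : Kˣ))⁻¹ := rfl
          rw [this, mul_comm ((u : Lˣ)) _, ← mul_assoc, mul_inv_cancel, one_mul]
        exact Subgroup.mem_sup.mpr
          ⟨Units.map (algebraMap K L : K →* L) (k : Kˣ), ⟨(k : Kˣ), rfl⟩,
            (z : Lˣ), hzU, hufact.symm⟩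
      · intro h
        rcases Subgroup.mem_sup.mp h with ⟨r, hr, w, hw, heq⟩
        rcases hr with ⟨k, rfl⟩
        have hmapmem' : Units.map (algebraMap K L : K →* L) k ∈ U0 := by
          have h1 : Units.map (algebraMap K L : K →* L) k = (u : Lˣ) * w⁻¹ := by
            rw [← heq, mul_inv_cancel_right]
          rw [h1]
          exact mul_mem u.2 (inv_mem (hUle hw))
        have hk0 : k ∈ Ov0.unitGroup := by
          rw [mem_unitGroup_iff_mem]
          rw [hU0, mem_unitGroup_iff_mem] at hmapmem'
          exact ⟨(hcomap _).mp hmapmem'.1, (hcomap _).mp hmapmem'.2⟩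
        have hsplit : u = (⟨Units.map (algebraMap K L : K →* L) k, hmapmem'⟩ : Ou0.unitGroup) *
            ⟨w, hUle hw⟩ := Subtype.ext heq.symm
        rw [hsplit, map_mul]
        refine mul_mem (Subgroup.mem_sup_left ?_) (Subgroup.mem_sup_right ?_)
        · rw [hH2 _ hk0 hmapmem']
          exact ⟨χK ⟨k, hk0⟩, rfl⟩
        · exact (hUbar ⟨w, hUle hw⟩).mpr hw
    show ((R ⊔ U).subgroupOf U0).index = (Rb ⊔ Ub).index
    rw [← hker, Subgroup.index_ker, MonoidHom.range_eq_top_of_surjective _ hφsurj]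
    show _ = Nat.card ((IsLocalRing.ResidueField Ou0)ˣ ⧸ (Rb ⊔ Ub))
    exact Nat.card_congr Subgroup.topEquiv.toEquiv
  · -- inertia degrees
    rw [inertiaDegree, inertiaDegree, dif_pos hu, dif_pos hbar]
    letI : Module (IsLocalRing.ResidueField Ov) (IsLocalRing.ResidueField Ou) :=
      (residueFieldMap (algebraMap K L) Ov Ou hu).toModule
    letI : Module (IsLocalRing.ResidueField Obarv) (IsLocalRing.ResidueField Obaru) :=
      (residueFieldMap g Obarv Obaru hbar).toModule
    set ev := barEquiv Ov Ov0 hle Obarv hObarv with hev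
    set eu := barEquiv Ou Ou0 hule Obaru hObaru with heu
    have hcomm : ∀ a : IsLocalRing.ResidueField Ov,
        eu (residueFieldMap (algebraMap K L) Ov Ou hu a) =
          residueFieldMap g Obarv Obaru hbar (ev a) := by
      intro a
      obtain ⟨x, rfl⟩ := IsLocalRing.residue_surjective a
      rw [residueFieldMap_residue, heu, barEquiv_residue, hev, barEquiv_residue,
        residueFieldMap_residue]
      congr 1
    have hlift := lift_rank_eq_of_equiv_equiv
      (R := IsLocalRing.ResidueField Ov) (R' := IsLocalRing.ResidueField Obarv)
      (M := IsLocalRing.ResidueField Ou) (M' := IsLocalRing.ResidueField Obaru)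
      ev eu.toAddEquiv ev.bijective
      (fun r m => by
        show eu (residueFieldMap (algebraMap K L) Ov Ou hu r * m) =
          residueFieldMap g Obarv Obaru hbar (ev r) * eu m
        rw [map_mul, hcomm r])
    have h2 := congrArg Cardinal.toNat hlift
    rwa [Cardinal.toNat_lift, Cardinal.toNat_lift] at h2
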